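/- The matrix with diagonal entries 1 and all off-diagonal entries equal to −0.4 is positive semidefinite (for n = 3), but the vector ρ with ρ(i,j) = −0.4 for all pairs 1 ≤ i < j ≤ 3 is not the correlation vector of any measure in B_3; equivalently, 1 − 2ρ = (1.8, 1.8, 1.8) ∉ CUT(3). -/

import Mathlib

open Finset MeasureTheory

noncomputable section

/-- Points of the discrete cube `{0,1}^n`. -/
abbrev Cube (n : ℕ) := Fin n → Bool

/-- Index set of pairs `1 ≤ i < j ≤ n`. -/
abbrev En (n : ℕ) := {p : Fin n × Fin n // p.1 < p.2}

/-- `μ` is an `n`-variate symmetric Bernoulli distribution: nonnegative,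
sums to one, and every coordinate marginal is `Bern(1/2)`. -/
def inBn (n : ℕ) (μ : Cube n → ℝ) : Prop :=
  (∀ y, 0 ≤ μ y) ∧ (∑ y, μ y) = 1 ∧
    ∀ k : Fin n, (∑ y ∈ Finset.univ.filter (fun y : Cube n => y k = false), μ y) = 1/2

/-- The uniform distribution on the diagonal `{x, 1 - x}`. -/
def piDiag (n : ℕ) (x : Cube n) : Cube n → ℝ :=
  fun y => if y = x ∨ y = (fun i => !(x i)) then 1/2 else 0

/-- Agreement probability of coordinates `i`, `j` under `μ`. -/
def lam (n : ℕ) (μ : Cube n → ℝ) (i j : Fin n) : ℝ :=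
  ∑ y ∈ Finset.univ.filter (fun y : Cube n => y i = y j), μ y

/-- Agreement vector of `μ`, indexed by pairs `i < j`. -/
def lamVec (n : ℕ) (μ : Cube n → ℝ) : En n → ℝ :=
  fun p => lam n μ p.1.1 p.1.2

/-- Cut vector of the subset `S` of `{1,...,n}`. -/
def cutVec (n : ℕ) (S : Finset (Fin n)) : En n → ℝ :=
  fun p => if (p.1.1 ∈ S ↔ p.1.2 ∈ S) then 0 else 1

/-- The cut polytope `CUT(n)`. -/
def CUT (n : ℕ) : Set (En n → ℝ) :=
  convexHull ℝ {v | ∃ S : Finset (Fin n), v = cutVec n S}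

/-- The switched cut polytope `CUT*(n)`. -/
def CUTstar (n : ℕ) : Set (En n → ℝ) :=
  convexHull ℝ {v | ∃ S : Finset (Fin n), v = fun p => 1 - cutVec n S p}

/-- Correlation vector of `μ`: `ρ(i,j) = 4 E[Y_i Y_j] - 1`. -/
def corrVec (n : ℕ) (μ : Cube n → ℝ) : En n → ℝ :=
  fun p => 4 * (∑ y : Cube n,
    μ y * (if y p.1.1 then (1:ℝ) else 0) * (if y p.1.2 then (1:ℝ) else 0)) - 1


lemma cube3_univ : (Finset.univ : Finset (Cube 3)) =
    {![false,false,false], ![false,false,true], ![false,true,false], ![false,true,true],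
     ![true,false,false], ![true,false,true], ![true,true,false], ![true,true,true]} := by
  decide

lemma sum_cube3 (f : Cube 3 → ℝ) : ∑ y, f y =
    f ![false,false,false] + f ![false,false,true] + f ![false,true,false] + f ![false,true,true] +
    f ![true,false,false] + f ![true,false,true] + f ![true,true,false] + f ![true,true,true] := by
  rw [cube3_univ]
  simp (config := { decide := true }) [Finset.sum_insert]
  ring

lemma en3_univ : (Finset.univ : Finset (En 3)) =
    {⟨(0,1), by decide⟩, ⟨(0,2), by decide⟩, ⟨(1,2), by decide⟩} := by decide

lemma sum_en3 (f : En 3 → ℝ) : ∑ p, f p =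
    f ⟨(0,1), by decide⟩ + f ⟨(0,2), by decide⟩ + f ⟨(1,2), by decide⟩ := by
  rw [en3_univ]
  simp (config := { decide := true }) [Finset.sum_insert]
  ring

theorem psd_but_not_bernoulli_correlation :
    (Matrix.of (fun i j : Fin 3 =>
        if i = j then (1:ℝ) else -0.4)).PosSemidef ∧
    (¬ ∃ μ : Cube 3 → ℝ, inBn 3 μ ∧ corrVec 3 μ = fun _ => -0.4) ∧
    (fun _ : En 3 => (1:ℝ) - 2 * (-0.4)) ∉ CUT 3 := by
  refine ⟨?_, ?_, ?_⟩
  · refine Matrix.PosSemidef.of_dotProduct_mulVec_nonneg ?_ ?_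
    · ext i j
      fin_cases i <;> fin_cases j <;> simp [Matrix.conjTranspose]
    · intro x
      simp (config := { decide := true }) only [Matrix.mulVec, dotProduct,
        Fin.sum_univ_three, Matrix.of_apply, if_true, if_false]
      norm_num
      nlinarith [sq_nonneg (x 0 - x 1), sq_nonneg (x 0 - x 2), sq_nonneg (x 1 - x 2),
        sq_nonneg (x 0 + x 1 + x 2)]
  · rintro ⟨μ, ⟨hpos, hsum, hmarg⟩, hcorr⟩
    have h01 := congrFun hcorr ⟨(0,1), by decide⟩
    have h02 := congrFun hcorr ⟨(0,2), by decide⟩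
    have h12 := congrFun hcorr ⟨(1,2), by decide⟩
    simp only [corrVec] at h01 h02 h12
    rw [sum_cube3] at h01 h02 h12 hsum
    have hm0 := hmarg 0
    have hm1 := hmarg 1
    have hm2 := hmarg 2
    rw [Finset.sum_filter, sum_cube3] at hm0 hm1 hm2
    simp at h01 h02 h12 hm0 hm1 hm2
    have p000 := hpos ![false,false,false]
    have p111 := hpos ![true,true,true]
    linarith
  · intro hmem
    have hlin : IsLinearMap ℝ (fun v : En 3 → ℝ => ∑ p, v p) :=
      ⟨fun a b => Finset.sum_add_distrib, fun c v => by simp [Finset.mul_sum]⟩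
    have hsub : CUT 3 ⊆ {v : En 3 → ℝ | ∑ p, v p ≤ 2} := by
      apply convexHull_min _ (convex_halfSpace_le hlin 2)
      rintro v ⟨S, rfl⟩
      show ∑ p, cutVec 3 S p ≤ 2
      rw [sum_en3]
      simp only [cutVec]
      by_cases h0 : (0:Fin 3) ∈ S <;> by_cases h1 : (1:Fin 3) ∈ S <;>
        by_cases h2 : (2:Fin 3) ∈ S <;> simp [h0, h1, h2] <;> norm_num
    have := hsub hmem
    rw [Set.mem_setOf_eq, sum_en3] at this
    norm_num at this
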